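/- The power series Z(T) = exp(∑_{n≥1} N_n T^n / n), where N_n = |X(F_{q^n})| is the number of F_{q^n}-rational points of a variety X over the finite field F_q, has integer coefficients. -/

import Mathlib

namespace DworkAux
section PartA
open PowerSeries Finset



noncomputable def F (d : ℕ) : PowerSeries ℚ := PowerSeries.mk fun i => if d ∣ i then 1 else 0
noncomputable def FZ (d : ℕ) : PowerSeries ℤ := PowerSeries.mk fun i => if d ∣ i then 1 else 0

lemma map_FZ (d : ℕ) : PowerSeries.map (Int.castRingHom ℚ) (FZ d) = F d := by
  ext i; simp [F, FZ, coeff_map, apply_ite (Int.cast : ℤ → ℚ)]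

lemma F_eq (d : ℕ) (hd : d ≠ 0) : F d = 1 + X ^ d * F d := by
  ext j
  rw [map_add, coeff_one, coeff_X_pow_mul']
  rcases Nat.eq_zero_or_pos j with rfl | hj
  · simp [F, Nat.pos_of_ne_zero hd, Nat.not_le.mpr (Nat.pos_of_ne_zero hd)]
  · rw [if_neg hj.ne']
    simp only [F, coeff_mk, zero_add]
    rcases le_or_gt d j with h | h
    · rw [if_pos h]
      have hiff : d ∣ j ↔ d ∣ j - d := by
        constructor
        · intro hdj; exact (Nat.dvd_sub hdj dvd_rfl)
        · intro hdj
          have := Nat.dvd_add hdj (dvd_refl d)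
          rwa [Nat.sub_add_cancel h] at this
      simp only [hiff]
    · rw [if_neg h.not_ge, if_neg]
      intro hdj
      exact absurd (Nat.le_of_dvd hj hdj) h.not_ge

lemma one_sub_mul_F (d : ℕ) (hd : d ≠ 0) : (1 - X ^ d) * F d = 1 := by
  have h : F d - X ^ d * F d = 1 := by nth_rewrite 1 [F_eq d hd]; ring
  rw [sub_mul, one_mul]
  exact h

lemma deriv_F (d : ℕ) (hd : d ≠ 0) :
    d⁄dX ℚ (F d) = ((d : ℚ⟦X⟧) * X ^ (d - 1) * F d) * F d := by
  have h1 : (1 - X ^ d) * d⁄dX ℚ (F d) = (d : ℚ⟦X⟧) * X ^ (d - 1) * F d := by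
    have hX : d⁄dX ℚ (X ^ d : ℚ⟦X⟧) = (d : ℚ⟦X⟧) * X ^ (d - 1) := by
      rw [Derivation.leibniz_pow, derivative_X, smul_eq_mul, mul_one, nsmul_eq_mul]
    have h := congrArg (d⁄dX ℚ) (F_eq d hd)
    rw [map_add, Derivation.leibniz, Derivation.map_one_eq_zero, hX,
      zero_add, smul_eq_mul, smul_eq_mul] at h
    linear_combination h
  calc d⁄dX ℚ (F d) = ((1 - X ^ d) * F d) * d⁄dX ℚ (F d) := by
        rw [one_sub_mul_F d hd, one_mul]
    _ = ((1 - X ^ d) * d⁄dX ℚ (F d)) * F d := by ring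
    _ = ((d : ℚ⟦X⟧) * X ^ (d - 1) * F d) * F d := by rw [h1]



lemma deriv_prod (s : Finset ℕ) (w g : ℕ → ℚ⟦X⟧)
    (h : ∀ d ∈ s, d⁄dX ℚ (w d) = g d * w d) :
    d⁄dX ℚ (∏ d ∈ s, w d) = (∑ d ∈ s, g d) * ∏ d ∈ s, w d := by
  classical
  induction s using Finset.induction_on with
  | empty => simp
  | @insert a s ha ih =>
    rw [Finset.prod_insert ha, Finset.sum_insert ha, Derivation.leibniz,
      ih (fun d hd => h d (Finset.mem_insert_of_mem hd)),
      h a (Finset.mem_insert_self a s), smul_eq_mul, smul_eq_mul]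
    ring

lemma derivPowAux (w g : ℚ⟦X⟧) (h : d⁄dX ℚ w = g * w) (M : ℕ) :
    d⁄dX ℚ (w ^ M) = ((M : ℚ⟦X⟧) * g) * w ^ M := by
  cases M with
  | zero => simp
  | succ M =>
    rw [Derivation.leibniz_pow, h, smul_eq_mul, nsmul_eq_mul, Nat.succ_sub_one]
    push_cast
    ring

lemma ite_dvd_helper (d j : ℕ) (hd : 1 ≤ d) :
    (if d - 1 ≤ j then (if d ∣ j - (d-1) then (1:ℚ) else 0) else 0)
      = if d ∣ j + 1 then 1 else 0 := by
  rcases le_or_gt (d-1) j with h | h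
  · rw [if_pos h]
    have h2 : j - (d - 1) = j + 1 - d := by omega
    have h3 : d ≤ j + 1 := by omega
    have hiff : d ∣ j - (d-1) ↔ d ∣ j + 1 := by
      rw [h2]
      constructor
      · intro hh
        have := Nat.dvd_add hh (dvd_refl d)
        rwa [Nat.sub_add_cancel h3] at this
      · intro hh; exact Nat.dvd_sub hh dvd_rfl
    simp [hiff]
  · rw [if_neg h.not_ge, if_neg]
    intro hdvd
    have := Nat.le_of_dvd (Nat.succ_pos j) hdvd
    omega

theorem partA (N M : ℕ → ℕ)
    (hNM : ∀ i : ℕ, i ≠ 0 → (N i : ℚ) = ∑ d ∈ Nat.divisors i, (d : ℚ) * (M d : ℚ))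
    (Z : ℚ⟦X⟧) (hZ0 : constantCoeff Z = 1)
    (hZ' : d⁄dX ℚ Z = PowerSeries.mk (fun j => (N (j+1) : ℚ)) * Z)
    (m : ℕ) : ∃ z : ℤ, coeff m Z = (z : ℚ) := by
  classical
  set WZ : ℤ⟦X⟧ := ∏ d ∈ Icc 1 m, FZ d ^ M d with hWZ
  set W : ℚ⟦X⟧ := PowerSeries.map (Int.castRingHom ℚ) WZ with hWdef
  have hW : W = ∏ d ∈ Icc 1 m, F d ^ M d := by
    rw [hWdef, hWZ, map_prod]
    exact Finset.prod_congr rfl fun d _ => by rw [map_pow, map_FZ]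
  suffices hsuff : ∀ j, j ≤ m → coeff j Z = coeff j W by
    refine ⟨coeff m WZ, ?_⟩
    rw [hsuff m le_rfl, hWdef, coeff_map]
    simp
  have hW0 : constantCoeff W = 1 := by
    rw [hW, map_prod]
    refine Finset.prod_eq_one fun d hd => ?_
    rw [map_pow]
    have : constantCoeff (F d) = 1 := by
      rw [← coeff_zero_eq_constantCoeff]
      simp [F]
    rw [this, one_pow]
  set G : ℚ⟦X⟧ := ∑ d ∈ Icc 1 m, ((M d : ℚ⟦X⟧) * ((d : ℚ⟦X⟧) * X ^ (d - 1) * F d)) with hG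
  have hWd : d⁄dX ℚ W = G * W := by
    rw [hW, hG]
    exact deriv_prod _ _ _ (fun d hd =>
      derivPowAux _ _ (deriv_F d (by rw [Finset.mem_Icc] at hd; omega)) (M d))
  have hGcoeff : ∀ j, j + 1 ≤ m → coeff j G = (N (j+1) : ℚ) := by
    intro j hj
    rw [hG, map_sum]
    have hterm : ∀ d ∈ Icc 1 m,
        coeff j ((M d : ℚ⟦X⟧) * ((d : ℚ⟦X⟧) * X ^ (d - 1) * F d))
          = if d ∣ j + 1 then (d : ℚ) * (M d : ℚ) else 0 := by
      intro d hd
      rw [Finset.mem_Icc] at hd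
      have : (M d : ℚ⟦X⟧) * ((d : ℚ⟦X⟧) * X ^ (d - 1) * F d)
          = C ((d : ℚ) * (M d : ℚ)) * (X ^ (d - 1) * F d) := by
        rw [map_mul, map_natCast, map_natCast]
        ring
      rw [this, coeff_C_mul, coeff_X_pow_mul']
      have := ite_dvd_helper d j hd.1
      rw [show (if d - 1 ≤ j then coeff (j - (d-1)) (F d) else 0)
            = if d ∣ j + 1 then (1:ℚ) else 0 from by
          rw [← this]
          rcases le_or_gt (d-1) j with h | h
          · simp only [if_pos h, F, coeff_mk]
          · simp only [if_neg h.not_ge]]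
      split_ifs <;> simp
    rw [Finset.sum_congr rfl hterm, ← Finset.sum_filter]
    have hfil : (Icc 1 m).filter (· ∣ j + 1) = (j+1).divisors := by
      ext a
      simp only [Finset.mem_filter, Finset.mem_Icc, Nat.mem_divisors]
      constructor
      · rintro ⟨⟨h1, h2⟩, h3⟩; exact ⟨h3, Nat.succ_ne_zero j⟩
      · rintro ⟨h1, -⟩
        have ha1 : 1 ≤ a := Nat.pos_of_dvd_of_pos h1 (Nat.succ_pos j)
        have ha2 : a ≤ j + 1 := Nat.le_of_dvd (Nat.succ_pos j) h1
        exact ⟨⟨ha1, le_trans ha2 hj⟩, h1⟩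
    rw [hfil, ← hNM (j+1) (Nat.succ_ne_zero j)]
  intro j
  induction j using Nat.strong_induction_on with
  | _ j ih =>
    intro hj
    match j with
    | 0 =>
      rw [coeff_zero_eq_constantCoeff_apply, coeff_zero_eq_constantCoeff_apply, hZ0, hW0]
    | Nat.succ j =>
      have hz := congrArg (coeff j) hZ'
      have hw := congrArg (coeff j) hWd
      rw [coeff_derivative, coeff_mul] at hz hw
      have hsum : ∑ p ∈ Finset.HasAntidiagonal.antidiagonal j, coeff p.1 (PowerSeries.mk (fun i => (N (i+1) : ℚ))) * coeff p.2 Z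
          = ∑ p ∈ Finset.HasAntidiagonal.antidiagonal j, coeff p.1 G * coeff p.2 W := by
        refine Finset.sum_congr rfl fun p hp => ?_
        rw [Finset.HasAntidiagonal.mem_antidiagonal] at hp
        have hp1 : p.1 + 1 ≤ m := by omega
        have hp2 : p.2 < j + 1 := by omega
        rw [coeff_mk, hGcoeff p.1 hp1, ih p.2 hp2 (by omega)]
      rw [hsum, ← hw] at hz
      have hne : ((j:ℚ) + 1) ≠ 0 := by positivity
      have := mul_right_cancel₀ hne hz
      exact this


end PartA
section PartB1
open Polynomial



lemma pow_pow_eq_self {A : Type*} [Monoid A] (x : A) (a m : ℕ) (h : x ^ a = x) :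
    x ^ (a ^ m) = x := by
  induction m with
  | zero => simpa using rfl
  | succ m ih => rw [pow_succ, pow_mul, ih, h]

/-- In any field extension `A` of a finite field `K` with `Q = |K|` elements, an element
satisfying `x ^ Q = x` lies in the image of `K`. -/
lemma mem_range_of_pow_card {K A : Type*} [Field K] [Fintype K] [Field A]
    (j : K →+* A) (x : A) (hx : x ^ Fintype.card K = x) :
    ∃ y : K, j y = x := by
  classical
  set Q := Fintype.card K with hQ
  have hQ2 : 2 ≤ Q := Fintype.one_lt_card
  set P : A[X] := X ^ Q - X with hP
  have hdeg : P.natDegree = Q := by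
    rw [hP, natDegree_sub_eq_left_of_natDegree_lt, natDegree_X_pow]
    rw [natDegree_X, natDegree_X_pow]; omega
  have hP0 : P ≠ 0 := by
    intro h
    have := hdeg
    rw [h, natDegree_zero] at this
    omega
  -- the image of K inside A
  set T : Finset A := Finset.univ.image j with hT
  have hTcard : T.card = Q := by
    rw [hT, Finset.card_image_of_injective _ j.injective, Finset.card_univ]
  have hroots : ∀ y ∈ T, y ∈ P.roots := by
    intro y hy
    rw [hT, Finset.mem_image] at hy
    obtain ⟨z, -, rfl⟩ := hy
    rw [mem_roots hP0]
    simp only [IsRoot, hP, eval_sub, eval_pow, eval_X]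
    rw [← map_pow, FiniteField.pow_card, sub_self]
  by_contra hcon
  push_neg at hcon
  have hxT : x ∉ T := by
    intro hx'
    rw [hT, Finset.mem_image] at hx'
    obtain ⟨z, -, hz⟩ := hx'
    exact hcon z hz
  have hxroot : x ∈ P.roots := by
    rw [mem_roots hP0]
    simp only [IsRoot, hP, eval_sub, eval_pow, eval_X]
    rw [hx, sub_self]
  have hsub : insert x T ⊆ P.roots.toFinset := by
    intro y hy
    rw [Finset.mem_insert] at hy
    rw [Multiset.mem_toFinset]
    rcases hy with rfl | hy
    · exact hxroot
    · exact hroots y hy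
  have h1 : (insert x T).card = Q + 1 := by
    rw [Finset.card_insert_of_notMem hxT, hTcard]
  have h2 : P.roots.toFinset.card ≤ Q := by
    refine le_trans (Multiset.toFinset_card_le _) ?_
    have := P.card_roots' -- roots.card ≤ natDegree
    omega
  have := Finset.card_le_card hsub
  omega

/-- Counting algebra homomorphisms between finite extensions of a finite field. -/
lemma card_algHom_finite (k E K : Type*) [Field k] [Field E] [Field K]
    [Fintype k] [Finite E] [Finite K] [Algebra k E] [Algebra k K] :
    Nat.card (E →ₐ[k] K) =
      if Module.finrank k E ∣ Module.finrank k K then Module.finrank k E else 0 := by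
  classical
  haveI : Fintype E := Fintype.ofFinite E
  haveI : Fintype K := Fintype.ofFinite K
  haveI : FiniteDimensional k E := Module.Finite.of_finite
  haveI : FiniteDimensional k K := Module.Finite.of_finite
  set d := Module.finrank k E with hd
  set n := Module.finrank k K with hn
  by_cases hdn : d ∣ n
  · rw [if_pos hdn]
    set A := AlgebraicClosure K with hA
    letI : Algebra k A := inferInstance
    haveI : Algebra.IsAlgebraic k E := Algebra.IsAlgebraic.of_finite k E
    -- restriction map is a bijection
    let j : K →+* A := algebraMap K A
    let res : (E →ₐ[k] K) → (E →ₐ[k] A) := fun φ => (IsScalarTower.toAlgHom k K A).comp φ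
    have hres_inj : Function.Injective res := by
      intro φ ψ h
      ext e
      have := congrArg (fun χ => χ e) h
      simp only [res, AlgHom.comp_apply] at this
      exact j.injective this
    have hres_surj : Function.Surjective res := by
      intro ψ
      have hmem : ∀ e : E, ψ e ∈ (IsScalarTower.toAlgHom k K A).range := by
        intro e
        have he : e ^ Fintype.card E = e := FiniteField.pow_card e
        have hcardE : Fintype.card E = Fintype.card k ^ d := Module.card_eq_pow_finrank
        have hcardK : Fintype.card K = Fintype.card k ^ n := Module.card_eq_pow_finrank
        obtain ⟨m, hm⟩ := hdn
        have hx : (ψ e) ^ (Fintype.card k ^ d) = ψ e := by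
          rw [← map_pow, ← hcardE, he]
        have hx2 : (ψ e) ^ Fintype.card K = ψ e := by
          rw [hcardK, hm, pow_mul]
          exact pow_pow_eq_self (ψ e) (Fintype.card k ^ d) m hx
        obtain ⟨y, hy⟩ := mem_range_of_pow_card j (ψ e) hx2
        exact ⟨y, hy⟩
      let φ' : E →ₐ[k] (IsScalarTower.toAlgHom k K A).range :=
        AlgHom.codRestrict ψ _ hmem
      have hKinj : Function.Injective (IsScalarTower.toAlgHom k K A) := j.injective
      let eK : K ≃ₐ[k] (IsScalarTower.toAlgHom k K A).range := AlgEquiv.ofInjective _ hKinj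
      refine ⟨(eK.symm.toAlgHom).comp φ', ?_⟩
      ext e
      simp only [res, AlgHom.comp_apply, IsScalarTower.coe_toAlgHom']
      have : (eK (eK.symm (φ' e)) : A) = (φ' e : A) := by rw [AlgEquiv.apply_symm_apply]
      have h2 : (φ' e : A) = ψ e := rfl
      rw [← h2, ← this]
      rfl
    have hcard : Nat.card (E →ₐ[k] K) = Nat.card (E →ₐ[k] A) :=
      Nat.card_congr (Equiv.ofBijective res ⟨hres_inj, hres_surj⟩)
    rw [hcard, ← Field.finSepDegree_eq_of_isAlgClosed k E A,
      Field.finSepDegree_eq_finrank_of_isSeparable k E]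
  · rw [if_neg hdn]
    rw [Nat.card_eq_zero]
    left
    constructor
    intro ι
    letI : Algebra E K := ι.toRingHom.toAlgebra
    haveI : IsScalarTower k E K :=
      IsScalarTower.of_algebraMap_eq fun x => (ι.commutes x).symm
    haveI : FiniteDimensional E K := Module.Finite.of_finite
    have : d * Module.finrank E K = n := Module.finrank_mul_finrank k E K
    exact hdn ⟨Module.finrank E K, this.symm⟩


end PartB1
section PartB2
open PowerSeries AlgebraicGeometry CategoryTheory





universe u

variable {k : Type} [Field k] [Fintype k] {X : Scheme} (f : X ⟶ Spec (CommRingCat.of k))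

/-- The structure map of the residue field of a point, as a ring hom from `k`. -/
noncomputable def resMap (x : X) : CommRingCat.of k ⟶ X.residueField x :=
  Spec.preimage (X.fromSpecResidueField x ≫ f)

lemma resMap_spec (x : X) :
    Spec.map (resMap f x) = X.fromSpecResidueField x ≫ f :=
  Spec.map_preimage _

/-- The `k`-algebra structure on the residue field at `x` induced by `f`. -/
noncomputable def resAlgebra (x : X) : Algebra k (X.residueField x) :=
  (resMap f x).hom.toAlgebra

/-- The degree of a point: the rank of its residue field over the base field. -/
noncomputable def deg (x : X) : ℕ :=
  @Module.finrank k (X.residueField x) _ _ (resAlgebra f x).toModule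

/-- The number of points of degree `d`. -/
noncomputable def Mcount (d : ℕ) : ℕ := Nat.card {x : X // deg f x = d}

variable (K : Type) [Field K] [Algebra k K]

/-- Points of `X` over `K`. -/
def pts : Type := {g : Spec (CommRingCat.of K) ⟶ X //
  g ≫ f = Spec.map (CommRingCat.ofHom (algebraMap k K))}

/-- `k`-algebra maps from the residue field at `x` to `K`. -/
def AH (x : X) : Type := @AlgHom k (X.residueField x) K _ _ _ (resAlgebra f x) _

noncomputable def step3 (x : X) :
    {φ : X.residueField x ⟶ CommRingCat.of K //
      resMap f x ≫ φ = CommRingCat.ofHom (algebraMap k K)} ≃ AH f K x := by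
  unfold AH
  letI := resAlgebra f x
  exact
  { toFun := fun φ =>
      { toRingHom := φ.1.hom
        commutes' := fun r => by
          have h := RingHom.congr_fun (congrArg CommRingCat.Hom.hom φ.2) r
          exact h }
    invFun := fun ψ => ⟨CommRingCat.ofHom ψ.toRingHom, by
      apply CommRingCat.hom_ext
      apply RingHom.ext
      intro r
      exact ψ.commutes r⟩
    left_inv := fun φ => rfl
    right_inv := fun ψ => rfl }

noncomputable def totalEquiv :
    pts f K ≃ Σ x : X, AH f K x := by
  refine (Equiv.subtypeEquiv (Scheme.SpecToEquivOfField K X) (fun g => ?_)).trans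
    ((⟨fun y => ⟨y.1.1, ⟨y.1.2, y.2⟩⟩, fun z => ⟨⟨z.1, z.2.1⟩, z.2.2⟩,
        fun _ => rfl, fun _ => rfl⟩ :
      {p : Σ x : X, (X.residueField x ⟶ CommRingCat.of K) //
        resMap f p.1 ≫ p.2 = CommRingCat.ofHom (algebraMap k K)} ≃
      Σ x : X, {φ : X.residueField x ⟶ CommRingCat.of K //
        resMap f x ≫ φ = CommRingCat.ofHom (algebraMap k K)}).trans
      (Equiv.sigmaCongrRight (step3 f K)))
  -- condition transfer
  have key : ∀ p : Σ x : X, (X.residueField x ⟶ CommRingCat.of K),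
      (Scheme.SpecToEquivOfField K X).symm p ≫ f =
        Spec.map (CommRingCat.ofHom (algebraMap k K)) ↔
      resMap f p.1 ≫ p.2 = CommRingCat.ofHom (algebraMap k K) := by
    intro p
    have h1 : (Scheme.SpecToEquivOfField K X).symm p =
        Spec.map p.2 ≫ X.fromSpecResidueField p.1 := rfl
    rw [h1, Category.assoc, ← resMap_spec f p.1, ← Spec.map_comp, Spec.map_inj]
  constructor
  · intro hg
    rw [← key]
    rwa [(Scheme.SpecToEquivOfField K X).symm_apply_apply]
  · intro hg
    have := (key _).mpr hg
    rwa [(Scheme.SpecToEquivOfField K X).symm_apply_apply] at this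


lemma finite_algHom (A : Type) [CommRing A] [Algebra k A] (hA : Algebra.FiniteType k A)
    [Finite K] : Finite (A →ₐ[k] K) := by
  classical
  obtain ⟨s, hs⟩ := hA.out
  refine Finite.of_injective (fun (φ : A →ₐ[k] K) (a : (s : Finset A)) => φ a) ?_
  intro φ ψ h
  have hsub : (s : Set A) ⊆ (AlgHom.equalizer φ ψ : Subalgebra k A) := by
    intro a ha
    have := congrFun h ⟨a, ha⟩
    exact this
  have : Algebra.adjoin k (s : Set A) ≤ AlgHom.equalizer φ ψ := Algebra.adjoin_le hsub
  rw [hs] at this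
  ext a
  exact this (show a ∈ (⊤ : Subalgebra k A) from trivial)

lemma finite_pts_affine (U : Scheme) [IsAffine U] (fU : U ⟶ Spec (CommRingCat.of k))
    [LocallyOfFiniteType fU] [Finite K] :
    Finite {h : Spec (CommRingCat.of K) ⟶ U //
      h ≫ fU = Spec.map (CommRingCat.ofHom (algebraMap k K))} := by
  set σ := Spec.preimage (U.isoSpec.inv ≫ fU) with hσdef
  have hσ : Spec.map σ = U.isoSpec.inv ≫ fU := Spec.map_preimage _
  have hft : RingHom.FiniteType σ.hom := by
    rw [← HasRingHomProperty.Spec_iff (P := @LocallyOfFiniteType)]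
    rw [hσ]
    infer_instance
  letI : Algebra k ↑Γ(U, ⊤) := σ.hom.toAlgebra
  haveI hFT : Algebra.FiniteType k ↑Γ(U, ⊤) := hft
  haveI fin1 : Finite (↑Γ(U, ⊤) →ₐ[k] K) := finite_algHom K ↑Γ(U, ⊤) hFT
  haveI fin2 : Finite {ψ : Γ(U, ⊤) ⟶ CommRingCat.of K //
      σ ≫ ψ = CommRingCat.ofHom (algebraMap k K)} := by
    refine Finite.of_injective (fun ψ =>
      ({ toRingHom := ψ.1.hom, commutes' := fun r => RingHom.congr_fun (congrArg CommRingCat.Hom.hom ψ.2) r } :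
        ↑Γ(U, ⊤) →ₐ[k] K)) ?_
    intro ψ χ h
    apply Subtype.ext
    apply CommRingCat.hom_ext
    apply RingHom.ext
    intro a
    exact congrArg (fun (θ : ↑Γ(U, ⊤) →ₐ[k] K) => θ a) h
  haveI fin3 : Finite {h' : Spec (CommRingCat.of K) ⟶ Spec Γ(U, ⊤) //
      h' ≫ Spec.map σ = Spec.map (CommRingCat.ofHom (algebraMap k K))} := by
    refine Finite.of_injective (fun h' => (⟨Spec.preimage h'.1, by
      have h2 := h'.2
      rw [← Spec.map_preimage h'.1, ← Spec.map_comp, Spec.map_inj] at h2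
      exact h2⟩ : {ψ : Γ(U, ⊤) ⟶ CommRingCat.of K //
        σ ≫ ψ = CommRingCat.ofHom (algebraMap k K)})) ?_
    intro a b h
    apply Subtype.ext
    have h2 := congrArg Subtype.val h
    dsimp at h2
    calc a.1 = Spec.map (Spec.preimage a.1) := (Spec.map_preimage _).symm
      _ = Spec.map (Spec.preimage b.1) := by rw [h2]
      _ = b.1 := Spec.map_preimage _
  have hfac : U.isoSpec.hom ≫ Spec.map σ = fU := by
    rw [hσ, Iso.hom_inv_id_assoc]
  refine Finite.of_injective (fun h => (⟨h.1 ≫ U.isoSpec.hom, by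
    rw [Category.assoc, hfac]
    exact h.2⟩ : {h' : Spec (CommRingCat.of K) ⟶ Spec Γ(U, ⊤) //
      h' ≫ Spec.map σ = Spec.map (CommRingCat.ofHom (algebraMap k K))})) ?_
  intro a b h
  apply Subtype.ext
  have h2 := congrArg Subtype.val h
  dsimp at h2
  exact (cancel_mono U.isoSpec.hom).mp h2

lemma finite_pts [LocallyOfFiniteType f] [QuasiCompact f] [Finite K] : Finite (pts f K) := by
  haveI : CompactSpace X := (quasiCompact_iff_compactSpace f).mp inferInstance
  set 𝒰 := X.affineCover.finiteSubcover with h𝒰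
  haveI : ∀ i, IsAffine (𝒰.X i) := fun i => X.isAffine_affineCover _
  haveI fin_i : ∀ i, Finite {h : Spec (CommRingCat.of K) ⟶ 𝒰.X i //
      h ≫ (𝒰.f i ≫ f) = Spec.map (CommRingCat.ofHom (algebraMap k K))} := fun i =>
    finite_pts_affine K (𝒰.X i) (𝒰.f i ≫ f)
  have hsurj : Function.Surjective
      (fun p : Σ i, {h : Spec (CommRingCat.of K) ⟶ 𝒰.X i //
          h ≫ (𝒰.f i ≫ f) = Spec.map (CommRingCat.ofHom (algebraMap k K))} =>
        (⟨p.2.1 ≫ 𝒰.f p.1, by rw [Category.assoc]; exact p.2.2⟩ : pts f K)) := by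
    rintro ⟨g, hg⟩
    haveI hsub : Subsingleton (Spec (CommRingCat.of K)).carrier := by
      show Subsingleton (PrimeSpectrum K)
      constructor
      intro a b
      ext1
      rw [Ideal.eq_bot_of_prime a.asIdeal, Ideal.eq_bot_of_prime b.asIdeal]
    set z := g.base (IsLocalRing.closedPoint K) with hz
    set i := 𝒰.idx z with hi
    have hrange : Set.range g.base ⊆ Set.range (𝒰.f i).base := by
      rintro w ⟨y, rfl⟩
      have : y = IsLocalRing.closedPoint K := Subsingleton.elim _ _
      rw [this]
      exact 𝒰.covers z
    refine ⟨⟨i, IsOpenImmersion.lift (𝒰.f i) g hrange, ?_⟩, ?_⟩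
    · rw [← Category.assoc, IsOpenImmersion.lift_fac]
      exact hg
    · exact Subtype.ext (IsOpenImmersion.lift_fac _ _ hrange)
  exact Finite.of_surjective _ hsurj


theorem card_pts [LocallyOfFiniteType f] [QuasiCompact f] [Finite K]
    (n : ℕ) (hn : n ≠ 0) (hrank : Module.finrank k K = n) :
    Nat.card (pts f K) = ∑ d ∈ n.divisors, d * Mcount f d := by
  classical
  haveI hfin : Finite (pts f K) := finite_pts f K
  have e := totalEquiv f K
  haveI : Finite (Σ x : X, AH f K x) := Finite.of_equiv _ e
  have hfiber : ∀ x : X, Nat.card (AH f K x) =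
      if deg f x ∣ n then deg f x else 0 := by
    intro x
    letI := resAlgebra f x
    by_cases hx : Finite (X.residueField x)
    · haveI := hx
      have hcnt := card_algHom_finite k (X.residueField x) K
      rw [show Nat.card (AH f K x) = Nat.card ((X.residueField x) →ₐ[k] K) from rfl,
        hcnt, hrank]
      rfl
    · have hempty : IsEmpty ((X.residueField x) →ₐ[k] K) := by
        constructor
        intro i
        exact hx (Finite.of_injective i i.injective)
      have h0 : Nat.card (AH f K x) = 0 := by
        rw [show Nat.card (AH f K x) = Nat.card ((X.residueField x) →ₐ[k] K) from rfl]
        simp [Nat.card_of_isEmpty]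
      rw [h0, if_neg]
      intro hdvd
      have hnfd : ¬ FiniteDimensional k (X.residueField x) := by
        intro hfd
        exact hx (Module.finite_of_finite k)
      rw [show deg f x = Module.finrank k (X.residueField x) from rfl,
        Module.finrank_of_infinite_dimensional hnfd] at hdvd
      exact hn (Nat.eq_zero_of_zero_dvd hdvd)
  haveI hfinAH : ∀ x : X, Finite (AH f K x) := by
    intro x
    letI := resAlgebra f x
    by_cases hx : Finite (X.residueField x)
    · haveI := hx
      have hF : Finite ((X.residueField x) →ₐ[k] K) := Finite.of_injective
        (fun (φ : (X.residueField x) →ₐ[k] K) => (φ : (X.residueField x) → K))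
        DFunLike.coe_injective
      exact hF
    · have hempty : IsEmpty ((X.residueField x) →ₐ[k] K) := by
        constructor
        intro i
        exact hx (Finite.of_injective i i.injective)
      have hF : Finite ((X.residueField x) →ₐ[k] K) := by
        haveI := hempty
        infer_instance
      exact hF
  set Supp := {x : X.carrier | Nonempty (AH f K x)} with hSupp
  haveI : Finite Supp := Finite.of_injective
    (fun x : Supp => (⟨x.1, Classical.choice x.2⟩ : Σ x : X, AH f K x))
    (by intro a b h; exact Subtype.ext (congrArg Sigma.fst h))
  haveI : Fintype Supp := Fintype.ofFinite _
  have eSig : (Σ x : Supp, AH f K x.1) ≃ (Σ x : X, AH f K x) :=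
    Equiv.sigmaSubtypeEquivOfSubset _ _ (fun x a => ⟨a⟩)
  haveI : ∀ x : Supp, Fintype (AH f K x.1) := fun x => Fintype.ofFinite _
  have hNcard : Nat.card (pts f K) = ∑ x : Supp, Nat.card (AH f K x.1) := by
    rw [Nat.card_congr (e.trans eSig.symm), Nat.card_eq_fintype_card, Fintype.card_sigma]
    exact Finset.sum_congr rfl fun x _ =>
      (Nat.card_eq_fintype_card (α := AH f K x.1)).symm
  have hdeg_dvd : ∀ x : Supp, deg f x.1 ∣ n ∧ Nat.card (AH f K x.1) = deg f x.1 := by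
    intro x
    have h := hfiber x.1
    have hpos : 0 < Nat.card (AH f K x.1) :=
      @Nat.card_pos _ (Set.mem_setOf.mp x.2) _
    by_cases hd : deg f x.1 ∣ n
    · exact ⟨hd, by rwa [if_pos hd] at h⟩
    · rw [if_neg hd] at h
      omega
  have hsum : ∑ x : Supp, Nat.card (AH f K x.1) = ∑ x : Supp, deg f x.1 :=
    Finset.sum_congr rfl (fun x _ => (hdeg_dvd x).2)
  have hmaps : ∀ x ∈ (Finset.univ : Finset Supp), deg f x.1 ∈ n.divisors :=
    fun x _ => Nat.mem_divisors.mpr ⟨(hdeg_dvd x).1, hn⟩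
  have hfw := Finset.sum_fiberwise_of_maps_to hmaps (fun x : Supp => deg f x.1)
  rw [hNcard, hsum, ← hfw]
  refine Finset.sum_congr rfl (fun d hd => ?_)
  have hd0 : d ≠ 0 := (Nat.pos_of_mem_divisors hd).ne'
  have hdn : d ∣ n := (Nat.mem_divisors.mp hd).1
  have hsc : ∑ x ∈ Finset.univ.filter (fun x : Supp => deg f x.1 = d), deg f x.1
      = (Finset.univ.filter (fun x : Supp => deg f x.1 = d)).card * d := by
    rw [Finset.sum_congr rfl (fun x hx => (Finset.mem_filter.mp hx).2),
      Finset.sum_const, smul_eq_mul]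
  rw [hsc]
  have hne : ∀ y : {x : X.carrier // deg f x = d}, y.1 ∈ Supp := by
    intro y
    have h := hfiber y.1
    rw [y.2, if_pos hdn] at h
    rw [hSupp, Set.mem_setOf]
    have := Nat.card_ne_zero (α := AH f K y.1)
    rw [h] at this
    exact ((this.mp hd0)).1
  have hM : Mcount f d = (Finset.univ.filter (fun x : Supp => deg f x.1 = d)).card := by
    rw [show Mcount f d = Nat.card {x : X.carrier // deg f x = d} from rfl]
    rw [Nat.card_congr (⟨fun y => ⟨⟨y.1, hne y⟩, y.2⟩, fun z => ⟨z.1.1, z.2⟩,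
      fun y => rfl, fun z => rfl⟩ :
      {x : X.carrier // deg f x = d} ≃ {x : Supp // deg f x.1 = d})]
    rw [Nat.card_eq_fintype_card, Fintype.card_subtype]
  rw [hM, Nat.mul_comm]



end PartB2
end DworkAux

open PowerSeries AlgebraicGeometry CategoryTheory

/-- Dwork: let `X` be a variety (reduced separated scheme of finite type)
over a finite field `k = F_q`, and for `n ≥ 1` let `N_n = |X(F_{q^n})|` be the number of
points of `X` rational over the degree-`n` extension `K n` of `k`.  Then the Hasse–Weil
series `Z(T) = exp(∑_{n≥1} (N_n/n) Tⁿ) ∈ ℚ⟦T⟧` has integer coefficients.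
(`Z = exp(S)` is characterized by `Z(0) = 1` and `Z' = S'·Z`.) -/
theorem hasse_weil_zeta_integer_coefficients
    (k : Type) [Field k] [Fintype k]
    (X : Scheme) (f : X ⟶ Spec (CommRingCat.of k))
    [IsReduced X] [AlgebraicGeometry.IsSeparated f]
    [LocallyOfFiniteType f] [QuasiCompact f]
    (K : ℕ → Type) [∀ n, Field (K n)] [∀ n, Algebra k (K n)]
    (hK : ∀ n, 1 ≤ n → Module.finrank k (K n) = n)
    (N : ℕ → ℕ)
    (hN : ∀ n, 1 ≤ n → N n =
      Nat.card {g : Spec (CommRingCat.of (K n)) ⟶ X //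
        g ≫ f = Spec.map (CommRingCat.ofHom (algebraMap k (K n)))})
    (S : PowerSeries ℚ)
    (hS : S = PowerSeries.mk fun n => if n = 0 then 0 else (N n : ℚ) / n)
    (Z : PowerSeries ℚ)
    (hZ0 : constantCoeff Z = 1)
    (hZ' : d⁄dX ℚ Z = d⁄dX ℚ S * Z) :
    ∀ m : ℕ, ∃ z : ℤ, coeff m Z = (z : ℚ) := by
  intro m
  have hKfin : ∀ n, 1 ≤ n → Finite (K n) := by
    intro n hn
    haveI : FiniteDimensional k (K n) := by
      by_contra h
      have h2 := hK n hn
      rw [Module.finrank_of_infinite_dimensional h] at h2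
      omega
    exact Module.finite_of_finite k
  have hNid : ∀ i, i ≠ 0 →
      (N i : ℚ) = ∑ d ∈ Nat.divisors i, (d : ℚ) * (DworkAux.Mcount f d : ℚ) := by
    intro i hi
    have h1 : 1 ≤ i := Nat.one_le_iff_ne_zero.mpr hi
    haveI := hKfin i h1
    have h3 := DworkAux.card_pts f (K i) i hi (hK i h1)
    rw [hN i h1]
    rw [show Nat.card {g : Spec (CommRingCat.of (K i)) ⟶ X //
        g ≫ f = Spec.map (CommRingCat.ofHom (algebraMap k (K i)))}
        = Nat.card (DworkAux.pts f (K i)) from rfl, h3]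
    push_cast
    rfl
  have hZ'' : d⁄dX ℚ Z = PowerSeries.mk (fun j => (N (j+1) : ℚ)) * Z := by
    rw [hZ']
    congr 1
    ext j
    rw [hS, coeff_derivative, coeff_mk, coeff_mk, if_neg (Nat.succ_ne_zero j)]
    have hne : ((j : ℚ) + 1) ≠ 0 := by positivity
    push_cast
    field_simp
  exact DworkAux.partA N (DworkAux.Mcount f) hNid Z hZ0 hZ'' m
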